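/- arXiv:2009.11828 — 7 statements merged into one kernel-verified Lean document; each statement's English description precedes it below -/
import Mathlib

section
/- Let M be a real p×k matrix with columns m_1,...,m_k, and let π_1,...,π_k be nonnegative real numbers with ∑_{t=1}^k π_t = 1 and π_t > 0 for all t. Then the k×k matrix diag(π_t^{-1} m_t^T m_t) − M^T M is positive semidefinite. -/
open Matrix BigOperators

/-- Lemma 1: diag(π_t⁻¹ mₜᵀmₜ) − MᵀM is positive semidefinite. -/
theorem stmt0 (p k : ℕ) (M : Matrix (Fin p) (Fin k) ℝ) (π : Fin k → ℝ)
    (hπ0 : ∀ t, 0 ≤ π t) (hπpos : ∀ t, 0 < π t) (hπsum : ∑ t, π t = 1) :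
    (Matrix.diagonal (fun t => (π t)⁻¹ * ((fun i => M i t) ⬝ᵥ (fun i => M i t)))
      - Mᵀ * M).PosSemidef := by
  rw [posSemidef_iff_dotProduct_mulVec]
  constructor
  · unfold Matrix.IsHermitian
    ext i j
    simp only [conjTranspose_apply, Matrix.sub_apply, diagonal_apply, mul_apply,
      transpose_apply, star_trivial]
    by_cases h : i = j
    · simp [h, mul_comm]
    · simp [h, Ne.symm h, mul_comm]
  · intro x
    have key : ∀ i, (∑ t, M i t * x t)^2 ≤ ∑ t, (x t * M i t)^2 / π t := by
      intro i
      have h := Finset.sq_sum_div_le_sum_sq_div Finset.univ (fun t => x t * M i t)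
        (g := π) (fun t _ => hπpos t)
      simpa [hπsum, mul_comm] using h
    have hq : (star x) ⬝ᵥ ((Matrix.diagonal (fun t => (π t)⁻¹ *
        ((fun i => M i t) ⬝ᵥ (fun i => M i t))) - Mᵀ * M) *ᵥ x)
        = (∑ t, ∑ i, (x t * M i t)^2 / π t) - ∑ i, (∑ t, M i t * x t)^2 := by
      rw [sub_mulVec, dotProduct_sub]
      congr 1
      · simp only [dotProduct, mulVec_diagonal, star_trivial]
        apply Finset.sum_congr rfl
        intro t _
        rw [Finset.mul_sum, Finset.sum_mul, Finset.mul_sum]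
        apply Finset.sum_congr rfl
        intro i _
        field_simp
      · simp only [dotProduct, mulVec, mul_apply, transpose_apply, star_trivial, sq,
          Finset.sum_mul_sum, Finset.sum_mul, Finset.mul_sum]
        rw [Finset.sum_comm]
        refine Eq.trans (Finset.sum_congr rfl fun t _ => Finset.sum_comm) ?_
        rw [Finset.sum_comm]
        apply Finset.sum_congr rfl
        intro i _
        apply Finset.sum_congr rfl
        intro t _
        apply Finset.sum_congr rfl
        intro y _
        ring
    rw [RCLike.nonneg_iff]
    constructor
    · rw [RCLike.re_to_real, hq, sub_nonneg, Finset.sum_comm]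
      exact Finset.sum_le_sum fun i _ => key i
    · simp
end

section
/- Let Σ be a symmetric positive definite p×p matrix, β_1,...,β_k, b_1,...,b_k ∈ ℝ^p, π_1,...,π_k > 0 with ∑π_t = 1. Let 𝔅 and B be the p×k matrices with columns β_t and b_t respectively. Then V(B) := diag(π_t^{-1}(β_t − b_t)^T Σ (β_t − b_t)) − (𝔅 − B)^T Σ (𝔅 − B) is positive semidefinite, and V(B) = 0 when B = 𝔅. -/
open Matrix BigOperators

lemma key0 (A B g U V : ℝ) (hA : 0 ≤ A) (hB : 0 ≤ B) (hg : g^2 ≤ A*B) :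
    2*(U*V*g) ≤ U^2*A + V^2*B := by
  have ha : Real.sqrt A ^ 2 = A := Real.sq_sqrt hA
  have hc : Real.sqrt B ^ 2 = B := Real.sq_sqrt hB
  have habs : |g| ≤ Real.sqrt A * Real.sqrt B := by
    have : Real.sqrt (g^2) ≤ Real.sqrt (A*B) := Real.sqrt_le_sqrt hg
    simpa [Real.sqrt_sq_eq_abs, Real.sqrt_mul hA] using this
  obtain ⟨h1, h2⟩ := abs_le.mp habs
  rcases le_or_gt 0 (U*V) with h | h
  · nlinarith [sq_nonneg (U*Real.sqrt A - V*Real.sqrt B)]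
  · nlinarith [sq_nonneg (U*Real.sqrt A + V*Real.sqrt B)]

/-- Key matrix inequality: V(B) := diag(πₜ⁻¹(βₜ−bₜ)ᵀΣ(βₜ−bₜ)) − (𝔅−B)ᵀΣ(𝔅−B) is PSD,
and V(𝔅) = 0. -/
theorem stmt2 (p k : ℕ) (S : Matrix (Fin p) (Fin p) ℝ) (hS : S.PosDef)
    (β b : Fin k → Fin p → ℝ) (π : Fin k → ℝ) (hπ : ∀ t, 0 < π t) (hsum : ∑ t, π t = 1)
    (Bβ Bb : Matrix (Fin p) (Fin k) ℝ)
    (hBβ : ∀ i t, Bβ i t = β t i) (hBb : ∀ i t, Bb i t = b t i) :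
    (Matrix.diagonal (fun t => (π t)⁻¹ * ((β t - b t) ⬝ᵥ S.mulVec (β t - b t))) -
      (Bβ - Bb)ᵀ * S * (Bβ - Bb)).PosSemidef ∧
    (b = β →
      Matrix.diagonal (fun t => (π t)⁻¹ * ((β t - b t) ⬝ᵥ S.mulVec (β t - b t))) -
        (Bβ - Bb)ᵀ * S * (Bβ - Bb) = 0) := by

  have hSsym : Sᵀ = S := by
    have := hS.isHermitian.eq
    simpa using this
  set d : Fin k → Fin p → ℝ := fun t => β t - b t with hd
  set g : Fin k → Fin k → ℝ := fun s t => d s ⬝ᵥ S.mulVec (d t) with hg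
  have gsymm : ∀ s t, g s t = g t s := by
    intro s t
    simp only [hg]
    rw [Matrix.dotProduct_mulVec]
    rw [show d s ᵥ* S = S *ᵥ d s by conv_lhs => rw [← hSsym, Matrix.vecMul_transpose]]
    exact dotProduct_comm _ _
  have gdiag : ∀ t, 0 ≤ g t t := by
    intro t
    have := hS.posSemidef.dotProduct_mulVec_nonneg (d t)
    simpa using this
  have gCS : ∀ s t, (g s t)^2 ≤ g s s * g t t := by
    intro s t
    have hq : ∀ r : ℝ, 0 ≤ g t t * (r*r) + (2 * g s t) * r + g s s := by
      intro r
      have h0 := hS.posSemidef.dotProduct_mulVec_nonneg (d s + r • d t)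
      have hexp : (d s + r • d t) ⬝ᵥ S.mulVec (d s + r • d t)
          = g t t * (r*r) + (2 * g s t) * r + g s s := by
        simp only [Matrix.mulVec_add, Matrix.mulVec_smul, dotProduct_add, add_dotProduct,
          smul_dotProduct, dotProduct_smul, smul_eq_mul, hg]
        have e1 : d s ⬝ᵥ S *ᵥ d s = g s s := rfl
        have e2 : d s ⬝ᵥ S *ᵥ d t = g s t := rfl
        have e3 : d t ⬝ᵥ S *ᵥ d s = g s t := (gsymm s t).symm
        have e4 : d t ⬝ᵥ S *ᵥ d t = g t t := rfl
        rw [e1, e2, e3, e4]; ring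
      rw [← hexp]
      simpa using h0
    have hdisc := discrim_le_zero hq
    simp only [discrim] at hdisc
    nlinarith [hdisc]
  have hG : (Bβ - Bb)ᵀ * S * (Bβ - Bb) = Matrix.of g := by
    ext s t
    simp only [Matrix.mul_apply, Matrix.transpose_apply, Matrix.sub_apply, hBβ, hBb,
      Matrix.of_apply, hg, Matrix.mulVec, dotProduct, hd, Pi.sub_apply,
      Finset.sum_mul, Finset.mul_sum]
    rw [Finset.sum_comm]
    exact Finset.sum_congr rfl fun i _ => Finset.sum_congr rfl fun j _ => by ring
  have hdiagf : (fun t => (π t)⁻¹ * ((β t - b t) ⬝ᵥ S.mulVec (β t - b t)))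
      = (fun t => (π t)⁻¹ * g t t) := by
    funext t; rfl
  rw [hdiagf, hG]
  have hquad : ∀ x : Fin k → ℝ,
      x ⬝ᵥ (Matrix.diagonal (fun t => (π t)⁻¹ * g t t) - Matrix.of g) *ᵥ x
      = (∑ t, (π t)⁻¹ * g t t * (x t * x t)) - ∑ s, ∑ t, x s * g s t * x t := by
    intro x
    rw [Matrix.sub_mulVec, dotProduct_sub]
    congr 1
    · simp only [dotProduct, Matrix.mulVec_diagonal]
      exact Finset.sum_congr rfl fun t _ => by ring
    · simp only [dotProduct, Matrix.mulVec, Matrix.of_apply]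
      refine Finset.sum_congr rfl fun s _ => ?_
      rw [Finset.mul_sum]
      exact Finset.sum_congr rfl fun t _ => by ring
  have hineq : ∀ x : Fin k → ℝ,
      ∑ s, ∑ t, x s * g s t * x t ≤ ∑ t, (π t)⁻¹ * g t t * (x t * x t) := by
    intro x
    calc ∑ s, ∑ t, x s * g s t * x t
        ≤ ∑ s, ∑ t, ((π t/π s) * (x s)^2 * g s s + (π s/π t) * (x t)^2 * g t t)/2 := by
          refine Finset.sum_le_sum fun s _ => Finset.sum_le_sum fun t _ => ?_
          have hA : (0:ℝ) ≤ (π t/π s) * g s s :=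
            mul_nonneg (le_of_lt (div_pos (hπ t) (hπ s))) (gdiag s)
          have hB : (0:ℝ) ≤ (π s/π t) * g t t :=
            mul_nonneg (le_of_lt (div_pos (hπ s) (hπ t))) (gdiag t)
          have hg2 : (g s t)^2 ≤ ((π t/π s) * g s s) * ((π s/π t) * g t t) := by
            have h1 : ((π t/π s) * g s s) * ((π s/π t) * g t t) = g s s * g t t := by
              have hπs := (hπ s).ne'
              have hπt := (hπ t).ne'
              field_simp
            rw [h1]; exact gCS s t
          have hk := key0 _ _ _ (x s) (x t) hA hB hg2
          nlinarith [hk]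
      _ = ∑ s, ∑ t, (π t/π s) * (x s)^2 * g s s := by
          have hsplit : ∀ s t : Fin k,
              ((π t/π s) * (x s)^2 * g s s + (π s/π t) * (x t)^2 * g t t)/2
              = ((π t/π s) * (x s)^2 * g s s)/2 + ((π s/π t) * (x t)^2 * g t t)/2 := by
            intro s t; ring
          simp only [hsplit, Finset.sum_add_distrib]
          rw [Finset.sum_comm (f := fun s t => ((π s/π t) * (x t)^2 * g t t)/2)]
          rw [← Finset.sum_add_distrib]
          refine Finset.sum_congr rfl fun s _ => ?_
          rw [← Finset.sum_add_distrib]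
          exact Finset.sum_congr rfl fun t _ => by ring
      _ = ∑ t, (π t)⁻¹ * g t t * (x t * x t) := by
          refine Finset.sum_congr rfl fun s _ => ?_
          have h2 : ∑ t, (π t/π s) * (x s)^2 * g s s
              = (∑ t, π t) * ((x s)^2 * g s s / π s) := by
            rw [Finset.sum_mul]
            exact Finset.sum_congr rfl fun t _ => by ring
          rw [h2, hsum, one_mul]
          have hπs := (hπ s).ne'
          field_simp
  constructor
  · refine Matrix.PosSemidef.of_dotProduct_mulVec_nonneg ?_ fun x => ?_
    · refine Matrix.IsHermitian.sub (Matrix.isHermitian_diagonal _) ?_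
      ext s t
      simp only [Matrix.conjTranspose_apply, Matrix.of_apply, star_trivial]
      exact gsymm t s
    · have h2 := hineq x
      have h := hquad x
      have hnn : (0:ℝ) ≤ x ⬝ᵥ (Matrix.diagonal (fun t => (π t)⁻¹ * g t t) - Matrix.of g) *ᵥ x := by
        rw [h]; linarith
      simpa using hnn
  · intro hbe
    subst hbe
    have hgall : ∀ s t, g s t = 0 := by
      intro s t
      simp [hg, hd, sub_self]
    have hdz : Matrix.diagonal (fun t => (π t)⁻¹ * g t t) = (0 : Matrix (Fin k) (Fin k) ℝ) := by
      ext s t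
      by_cases h : s = t <;> simp [Matrix.diagonal_apply, h, hgall]
    have hoz : Matrix.of g = (0 : Matrix (Fin k) (Fin k) ℝ) := by
      ext s t
      simp [hgall]
    rw [hdz, hoz, sub_zero]
end

section
/- Let Σ be a symmetric positive semidefinite p×p matrix, β_t, β_s ∈ ℝ^p, and π_t, π_s > 0 with π_t + π_s ≤ 1. Then π_t^{-1} β_t^T Σ β_t + π_s^{-1} β_s^T Σ β_s − (β_t − β_s)^T Σ (β_t − β_s) = (π_t π_s (π_t + π_s))^{-1} (π_s β_t + π_t β_s)^T Σ (π_s β_t + π_t β_s) + ((1 − π_t − π_s)/(π_t + π_s)) (β_t − β_s)^T Σ (β_t − β_s). -/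
open Matrix

/-- Algebraic identity decomposing the ANHECOVA-over-ANOVA efficiency gain. -/
theorem stmt3 (p : ℕ) (S : Matrix (Fin p) (Fin p) ℝ) (hS : S.PosSemidef)
    (βt βs : Fin p → ℝ) (πt πs : ℝ) (hπt : 0 < πt) (hπs : 0 < πs) (hsum : πt + πs ≤ 1) :
    πt⁻¹ * (βt ⬝ᵥ S.mulVec βt) + πs⁻¹ * (βs ⬝ᵥ S.mulVec βs)
        - (βt - βs) ⬝ᵥ S.mulVec (βt - βs)
      = (πt * πs * (πt + πs))⁻¹ *
          ((πs • βt + πt • βs) ⬝ᵥ S.mulVec (πs • βt + πt • βs))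
        + ((1 - πt - πs) / (πt + πs)) * ((βt - βs) ⬝ᵥ S.mulVec (βt - βs)) := by
  have hsym : βs ⬝ᵥ S.mulVec βt = βt ⬝ᵥ S.mulVec βs := by
    rw [Matrix.dotProduct_mulVec, ← Matrix.mulVec_transpose]
    have : Sᵀ = S := by
      have := hS.1
      simpa [Matrix.IsHermitian, Matrix.conjTranspose_eq_transpose_of_trivial] using this
    rw [this, dotProduct_comm]
  simp only [Matrix.mulVec_add, Matrix.mulVec_smul, Matrix.mulVec_sub,
    dotProduct_add, add_dotProduct, smul_dotProduct, dotProduct_smul,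
    sub_dotProduct, dotProduct_sub, smul_eq_mul]
  rw [hsym]
  field_simp
  ring
end

section
/- Let Σ be a symmetric positive semidefinite p×p matrix, β_t, β_s ∈ ℝ^p, and π_t, π_s > 0 with π_t + π_s ≤ 1. Then π_t^{-1} β_t^T Σ β_t + π_s^{-1} β_s^T Σ β_s ≥ (β_t − β_s)^T Σ (β_t − β_s), with equality (when Σ is positive definite) if and only if π_s β_t + π_t β_s = 0 and (1 − π_t − π_s)(β_t − β_s) = 0. -/
open Matrix

lemma cross_symm {p : ℕ} (S : Matrix (Fin p) (Fin p) ℝ) (hS : S.PosSemidef)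
    (x y : Fin p → ℝ) : y ⬝ᵥ S.mulVec x = x ⬝ᵥ S.mulVec y := by
  have h : Sᵀ = S := by
    have h' : S.IsSymm := by simpa using hS.isHermitian
    exact h'
  rw [dotProduct_mulVec, ← mulVec_transpose, h, dotProduct_comm]

/-- Quadratic form inequality comparing ANOVA and ANHECOVA contrast variances, with
equality characterization when Σ is positive definite. -/
theorem stmt4 (p : ℕ) (S : Matrix (Fin p) (Fin p) ℝ) (hS : S.PosSemidef)
    (βt βs : Fin p → ℝ) (πt πs : ℝ) (hπt : 0 < πt) (hπs : 0 < πs) (hsum : πt + πs ≤ 1) :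
    ((βt - βs) ⬝ᵥ S.mulVec (βt - βs)
        ≤ πt⁻¹ * (βt ⬝ᵥ S.mulVec βt) + πs⁻¹ * (βs ⬝ᵥ S.mulVec βs)) ∧
    (S.PosDef →
      ((βt - βs) ⬝ᵥ S.mulVec (βt - βs)
          = πt⁻¹ * (βt ⬝ᵥ S.mulVec βt) + πs⁻¹ * (βs ⬝ᵥ S.mulVec βs)
        ↔ πs • βt + πt • βs = 0 ∧ (1 - πt - πs) • (βt - βs) = 0)) := by
  set a := βt ⬝ᵥ S.mulVec βt with ha
  set b := βs ⬝ᵥ S.mulVec βs with hb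
  set c := βt ⬝ᵥ S.mulVec βs with hc
  have hcross : βs ⬝ᵥ S.mulVec βt = c := (cross_symm S hS βs βt).symm
  set v := πs • βt + πt • βs with hv
  set Qv := v ⬝ᵥ S.mulVec v with hQv
  set r := 1 - πt - πs with hr
  have hr0 : 0 ≤ r := by linarith
  have ha0 : 0 ≤ a := by simpa using hS.dotProduct_mulVec_nonneg βt
  have hb0 : 0 ≤ b := by simpa using hS.dotProduct_mulVec_nonneg βs
  have hQv0 : 0 ≤ Qv := by simpa using hS.dotProduct_mulVec_nonneg v
  have hQd : (βt - βs) ⬝ᵥ S.mulVec (βt - βs) = a - 2 * c + b := by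
    simp only [mulVec_sub, dotProduct_sub, sub_dotProduct, ha, hb, hc, hcross]
    ring
  have hQvE : Qv = πs ^ 2 * a + 2 * (πt * πs) * c + πt ^ 2 * b := by
    simp only [hQv, hv, mulVec_add, mulVec_smul, dotProduct_add, add_dotProduct,
      dotProduct_smul, smul_dotProduct, smul_eq_mul, ha, hb, hc, hcross]
    ring
  have key : πt⁻¹ * a + πs⁻¹ * b - (a - 2 * c + b)
      = Qv / (πt * πs) + r * (a / πt + b / πs) := by
    rw [hQvE, hr]
    field_simp
    ring
  have hterm2 : 0 ≤ r * (a / πt + b / πs) :=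
    mul_nonneg hr0 (add_nonneg (div_nonneg ha0 hπt.le) (div_nonneg hb0 hπs.le))
  have hterm1 : 0 ≤ Qv / (πt * πs) := div_nonneg hQv0 (mul_nonneg hπt.le hπs.le)
  constructor
  · rw [hQd]; linarith
  · intro hPD
    constructor
    · intro heq
      rw [hQd] at heq
      have hsum0 : Qv / (πt * πs) + r * (a / πt + b / πs) = 0 := by linarith
      have h1 : Qv / (πt * πs) = 0 := by linarith
      have h2 : r * (a / πt + b / πs) = 0 := by linarith
      have hQvz : Qv = 0 := by
        have := div_eq_zero_iff.mp h1
        rcases this with h | h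
        · exact h
        · exfalso; nlinarith
      have hv0 : v = 0 := by
        by_contra hne
        exact absurd hQvz (ne_of_gt (by simpa using hPD.dotProduct_mulVec_pos hne))
      refine ⟨hv0, ?_⟩
      rcases mul_eq_zero.mp h2 with hrz | habz
      · rw [hrz, zero_smul]
      · have haz : a = 0 := by
          have : a / πt = 0 := by
            have h1' : 0 ≤ a / πt := div_nonneg ha0 hπt.le
            have h2' : 0 ≤ b / πs := div_nonneg hb0 hπs.le
            linarith
          rcases div_eq_zero_iff.mp this with h | h
          · exact h
          · exact absurd h hπt.ne'
        have hbz : b = 0 := by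
          have haz' : a / πt = 0 := by rw [haz]; simp
          have : b / πs = 0 := by linarith
          rcases div_eq_zero_iff.mp this with h | h
          · exact h
          · exact absurd h hπs.ne'
        have hβt : βt = 0 := by
          by_contra hne
          exact absurd haz (ne_of_gt (by simpa using hPD.dotProduct_mulVec_pos hne))
        have hβs : βs = 0 := by
          by_contra hne
          exact absurd hbz (ne_of_gt (by simpa using hPD.dotProduct_mulVec_pos hne))
        rw [hβt, hβs, sub_zero, smul_zero]
    · rintro ⟨hv0, hrd⟩
      have hQvz : Qv = 0 := by rw [hQv, hv0]; simp
      rw [hQd]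
      rcases eq_or_ne r 0 with hrz | hrne
      · have : Qv / (πt * πs) + r * (a / πt + b / πs) = 0 := by
          rw [hQvz, hrz]; ring
        linarith [key, this]
      · have hd : βt - βs = 0 := by
          have := smul_eq_zero.mp hrd
          tauto
        have hβ : βt = βs := sub_eq_zero.mp hd
        have hβt0 : βt = 0 := by
          have h' : (πs + πt) • βt = 0 := by
            rw [add_smul]
            rw [hv, ← hβ] at hv0
            exact hv0
          rcases smul_eq_zero.mp h' with h | h
          · exact absurd h (by positivity)
          · exact h
        have hβs0 : βs = 0 := hβ ▸ hβt0
        simp [ha, hb, hc, hβt0, hβs0]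
end

section
/- Suppose (Y^{(t)}, X, A) satisfies: A takes values in the standard basis vectors a_1,...,a_k of ℝ^k, A is independent of (Y^{(1)},...,Y^{(k)}, X), P(A = a_t) = π_t > 0, the observed response is Y = ∑_t Y^{(t)} I(A = a_t), and all variables are square-integrable with var(X) = Σ_X positive definite. Then the minimizer (ϑ, b) of E[(Y − ϑ^T A − b^T (X − μ_X))²] over ϑ ∈ ℝ^k, b ∈ ℝ^p is unique and given by ϑ_t = E(Y^{(t)}) for each t and b = ∑_{t=1}^k π_t β_t, where β_t = Σ_X^{-1} cov(X, Y^{(t)}) and μ_X = E(X). -/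
open Matrix MeasureTheory BigOperators

private lemma mulL2' {Ω : Type*} [MeasurableSpace Ω] {μ : Measure Ω} {f g : Ω → ℝ}
    (hf : MemLp f 2 μ) (hg : MemLp g 2 μ) : Integrable (fun ω => f ω * g ω) μ := by
  refine (hf.integrable_sq.add hg.integrable_sq).mono'
    (hf.aestronglyMeasurable.mul hg.aestronglyMeasurable) ?_
  filter_upwards with ω
  simp only [Pi.add_apply]
  rw [Real.norm_eq_abs, abs_mul]
  nlinarith [sq_nonneg (|f ω| - |g ω|), sq_abs (f ω), sq_abs (g ω), abs_nonneg (f ω),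
    abs_nonneg (g ω)]

/-- Lemma 2(ii), first part: population least squares under the homogeneous (ANCOVA)
working model uniquely identifies θₜ = E(Y⁽ᵗ⁾) and b = ∑ πₜ βₜ. -/
theorem stmt10 {Ω : Type*} [MeasurableSpace Ω] (μ : Measure Ω) [IsProbabilityMeasure μ]
    (p k : ℕ) (Yp : Fin k → Ω → ℝ) (X : Ω → Fin p → ℝ) (T : Ω → Fin k)
    (hT : Measurable T)
    (hYp : ∀ t, MemLp (Yp t) 2 μ) (hX : ∀ i, MemLp (fun ω => X ω i) 2 μ)
    (A : Ω → Fin k → ℝ) (hA : ∀ ω, A ω = fun t => if T ω = t then 1 else 0)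
    (hindep : ProbabilityTheory.IndepFun T (fun ω => (fun t => Yp t ω, X ω)) μ)
    (π : Fin k → ℝ) (hπ : ∀ t, 0 < π t)
    (hPT : ∀ t, μ {ω | T ω = t} = ENNReal.ofReal (π t))
    (Y : Ω → ℝ) (hY : ∀ ω, Y ω = Yp (T ω) ω)
    (μX : Fin p → ℝ) (hμX : ∀ i, μX i = ∫ ω, X ω i ∂μ)
    (S : Matrix (Fin p) (Fin p) ℝ)
    (hS : ∀ i j, S i j = ∫ ω, (X ω i - μX i) * (X ω j - μX j) ∂μ)
    (hSpd : S.PosDef)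
    (β : Fin k → Fin p → ℝ)
    (hβ : ∀ t, β t = S⁻¹.mulVec (fun i => ∫ ω, (X ω i - μX i) * (Yp t ω - ∫ ω', Yp t ω' ∂μ) ∂μ))
    (θ : Fin k → ℝ) (hθ : ∀ t, θ t = ∫ ω, Yp t ω ∂μ)
    (bstar : Fin p → ℝ) (hbstar : bstar = ∑ t, π t • β t)
    (L : (Fin k → ℝ) → (Fin p → ℝ) → ℝ)
    (hL : ∀ ϑ b, L ϑ b = ∫ ω, (Y ω - ϑ ⬝ᵥ A ω - b ⬝ᵥ (X ω - μX)) ^ 2 ∂μ) :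
    (∀ ϑ b, L θ bstar ≤ L ϑ b) ∧
    (∀ ϑ b, L ϑ b = L θ bstar → ϑ = θ ∧ b = bstar) := by
  classical
  set At : Fin k → Ω → ℝ := fun t ω => if T ω = t then 1 else 0 with hAtdef
  set Xc : Fin p → Ω → ℝ := fun i ω => X ω i - μX i with hXcdef
  have hXc2 : ∀ i, MemLp (Xc i) 2 μ := fun i => (hX i).sub (memLp_const (μX i))
  have hTset : ∀ t, MeasurableSet {ω | T ω = t} := fun t => hT (measurableSet_singleton t)
  have hAt_eq : ∀ t, At t = Set.indicator {ω | T ω = t} (fun _ => (1:ℝ)) := by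
    intro t; funext ω
    simp [hAtdef, Set.indicator_apply, Set.mem_setOf_eq]
  have hAt2 : ∀ t, MemLp (At t) 2 μ := by
    intro t; rw [hAt_eq t]; exact (memLp_const 1).indicator (hTset t)
  have hAtY2 : ∀ t, MemLp (fun ω => At t ω * Yp t ω) 2 μ := by
    intro t
    have : (fun ω => At t ω * Yp t ω) = Set.indicator {ω | T ω = t} (Yp t) := by
      funext ω
      by_cases h : T ω = t <;> simp [hAtdef, Set.indicator_apply, Set.mem_setOf_eq, h]
    rw [this]; exact (hYp t).indicator (hTset t)
  have hYdecomp : ∀ ω, Y ω = ∑ t, At t ω * Yp t ω := by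
    intro ω; rw [hY]
    simp [hAtdef, ite_mul, Finset.sum_ite_eq]
  have hY2 : MemLp Y 2 μ := by
    have : Y = fun ω => ∑ t, At t ω * Yp t ω := funext hYdecomp
    rw [this]
    exact memLp_finset_sum _ (fun t _ => hAtY2 t)
  have intAt : ∀ t, ∫ ω, At t ω ∂μ = π t := by
    intro t
    rw [hAt_eq t, integral_indicator_const (1:ℝ) (hTset t), measureReal_def, hPT t,
      ENNReal.toReal_ofReal (hπ t).le, smul_eq_mul, mul_one]
  -- the key independence computation
  have key : ∀ (t : Fin k) (f : Ω → ℝ) (ψ : (Fin k → ℝ) × (Fin p → ℝ) → ℝ), Measurable ψ →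
      (∀ ω, f ω = ψ (fun s => Yp s ω, X ω)) → AEStronglyMeasurable f μ →
      ∫ ω, At t ω * f ω ∂μ = π t * ∫ ω, f ω ∂μ := by
    intro t f ψ hψm hfψ hfm
    have hφ : Measurable (fun s : Fin k => if s = t then (1:ℝ) else 0) := measurable_from_top
    have hI : ProbabilityTheory.IndepFun (At t) f μ := by
      have h2 := hindep.comp hφ hψm
      have e1 : At t = (fun s => if s = t then (1:ℝ) else 0) ∘ T := rfl
      have e2 : f = ψ ∘ (fun ω => (fun s => Yp s ω, X ω)) := funext hfψ
      rw [e1, e2]; exact h2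
    rw [hI.integral_fun_mul_eq_mul_integral (hAt2 t).aestronglyMeasurable hfm, intAt t]
  have hXcInt : ∀ i, Integrable (Xc i) μ := fun i => (hXc2 i).integrable one_le_two
  have hXcMean : ∀ i, ∫ ω, Xc i ω ∂μ = 0 := by
    intro i
    have h := integral_sub ((hX i).integrable one_le_two) (integrable_const (μX i))
    simp only [integral_const, probReal_univ, measure_univ, ENNReal.toReal_one, one_smul] at h
    calc ∫ ω, Xc i ω ∂μ = (∫ ω, X ω i ∂μ) - μX i := h
    _ = 0 := by rw [← hμX i]; ring
  have M1 : ∀ t s, ∫ ω, At t ω * At s ω ∂μ = if t = s then π t else 0 := by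
    intro t s
    by_cases h : t = s
    · subst h
      have e : ∀ ω, At t ω * At t ω = At t ω := by
        intro ω; by_cases h : T ω = t <;> simp [hAtdef, h]
      simp only [e, if_pos rfl]
      exact intAt t
    · have e : ∀ ω, At t ω * At s ω = 0 := by
        intro ω
        by_cases h1 : T ω = t
        · have h2 : T ω ≠ s := by rw [h1]; exact h
          simp [hAtdef, h1, h2, h]
        · simp [hAtdef, h1]
      simp only [e, if_neg h, integral_zero]
  have M2 : ∀ t i, ∫ ω, At t ω * Xc i ω ∂μ = 0 := by
    intro t i
    have := key t (Xc i) (fun z => z.2 i - μX i)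
      (((measurable_pi_apply i).comp measurable_snd).sub measurable_const)
      (fun ω => rfl) (hXc2 i).aestronglyMeasurable
    rw [this, hXcMean i, mul_zero]
  have M4 : ∀ t, ∫ ω, Y ω * At t ω ∂μ = π t * θ t := by
    intro t
    have e : ∀ ω, Y ω * At t ω = At t ω * Yp t ω := by
      intro ω; by_cases h : T ω = t
      · simp [hAtdef, h, hY ω, mul_comm]
      · simp [hAtdef, h]
    simp_rw [e]
    rw [key t (Yp t) (fun z => z.1 t) ((measurable_pi_apply t).comp measurable_fst)
      (fun ω => rfl) (hYp t).aestronglyMeasurable, ← hθ t]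
  have hdet : IsUnit S.det := hSpd.det_pos.ne'.isUnit
  have hScov : ∀ t, S.mulVec (β t) = fun i => ∫ ω, Xc i ω * (Yp t ω - θ t) ∂μ := by
    intro t
    rw [hβ t, Matrix.mulVec_mulVec, Matrix.mul_nonsing_inv S hdet, Matrix.one_mulVec]
    funext i
    rw [← hθ t]
  have M5pre : ∀ t i, ∫ ω, Yp t ω * Xc i ω ∂μ = S.mulVec (β t) i := by
    intro t i
    have h2 : S.mulVec (β t) i = ∫ ω, Xc i ω * (Yp t ω - θ t) ∂μ := congrFun (hScov t) i
    have e : ∀ ω, Xc i ω * (Yp t ω - θ t) = Xc i ω * Yp t ω - θ t * Xc i ω := by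
      intro ω; ring
    rw [h2]
    simp_rw [e]
    rw [integral_sub (mulL2' (hXc2 i) (hYp t)) ((hXcInt i).const_mul (θ t)),
      integral_const_mul, hXcMean i, mul_zero, sub_zero]
    exact integral_congr_ae (Filter.Eventually.of_forall fun ω => mul_comm _ _)
  have M5 : ∀ i, ∫ ω, Y ω * Xc i ω ∂μ = ∑ t, π t * S.mulVec (β t) i := by
    intro i
    have e : ∀ ω, Y ω * Xc i ω = ∑ t, At t ω * (Yp t ω * Xc i ω) := by
      intro ω; rw [hYdecomp ω, Finset.sum_mul]
      exact Finset.sum_congr rfl (fun t _ => by ring)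
    simp_rw [e]
    rw [integral_finset_sum]
    · refine Finset.sum_congr rfl (fun t _ => ?_)
      rw [key t (fun ω => Yp t ω * Xc i ω) (fun z => z.1 t * (z.2 i - μX i))
        (((measurable_pi_apply t).comp measurable_fst).mul
          (((measurable_pi_apply i).comp measurable_snd).sub measurable_const))
        (fun ω => rfl) ((hYp t).aestronglyMeasurable.mul (hXc2 i).aestronglyMeasurable),
        M5pre t i]
    · intro t _
      have e2 : ∀ ω, At t ω * (Yp t ω * Xc i ω) = (At t ω * Yp t ω) * Xc i ω := by
        intro ω; ring
      simp_rw [e2]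
      exact mulL2' (hAtY2 t) (hXc2 i)
  have Ssymm : ∀ i j, S i j = S j i := by
    intro i j; rw [hS, hS]
    exact integral_congr_ae (Filter.Eventually.of_forall fun ω => mul_comm _ _)
  have hSb : ∀ i, S.mulVec bstar i = ∑ t, π t * S.mulVec (β t) i := by
    intro i
    rw [hbstar, ← Matrix.mulVecLin_apply, map_sum]
    simp only [Matrix.mulVecLin_apply, Finset.sum_apply, Matrix.mulVec_smul,
      Pi.smul_apply, smul_eq_mul]
  have M2' : ∀ i t, ∫ ω, Xc i ω * At t ω ∂μ = 0 := by
    intro i t; rw [← M2 t i]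
    exact integral_congr_ae (.of_forall fun ω => mul_comm _ _)
  have M3 : ∀ i j, ∫ ω, Xc i ω * Xc j ω ∂μ = S i j := fun i j => (hS i j).symm
  have sumS : ∀ (c : Fin p → ℝ) (i : Fin p), ∑ j, c j * S i j = S.mulVec c i := by
    intro c i
    simp [Matrix.mulVec, dotProduct, mul_comm]
  -- linear combination machinery
  set lc : (Fin k → ℝ) → (Fin p → ℝ) → Ω → ℝ :=
    fun δ c ω => (∑ t, δ t * At t ω) + ∑ i, c i * Xc i ω with hlcdef
  have lc2 : ∀ δ c, MemLp (lc δ c) 2 μ := by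
    intro δ c
    exact (memLp_finset_sum _ (fun t _ => (hAt2 t).const_mul (δ t))).add
      (memLp_finset_sum _ (fun i _ => (hXc2 i).const_mul (c i)))
  have exp_right : ∀ (f : Ω → ℝ), MemLp f 2 μ → ∀ δ c,
      ∫ ω, f ω * lc δ c ω ∂μ =
        (∑ t, δ t * ∫ ω, f ω * At t ω ∂μ) + ∑ i, c i * ∫ ω, f ω * Xc i ω ∂μ := by
    intro f hf δ c
    have e : ∀ ω, f ω * lc δ c ω =
        (∑ t, δ t * (f ω * At t ω)) + ∑ i, c i * (f ω * Xc i ω) := by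
      intro ω
      simp only [hlcdef, mul_add, Finset.mul_sum]
      congr 1 <;> exact Finset.sum_congr rfl (fun _ _ => by ring)
    simp_rw [e]
    rw [integral_add (integrable_finset_sum _ (fun t _ => ((mulL2' hf (hAt2 t)).const_mul (δ t))))
        (integrable_finset_sum _ (fun i _ => ((mulL2' hf (hXc2 i)).const_mul (c i)))),
      integral_finset_sum _ (fun t _ => ((mulL2' hf (hAt2 t)).const_mul (δ t))),
      integral_finset_sum _ (fun i _ => ((mulL2' hf (hXc2 i)).const_mul (c i)))]
    simp_rw [integral_const_mul]
  set g : Ω → ℝ := fun ω => Y ω - lc θ bstar ω with hgdef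
  have hg2 : MemLp g 2 μ := hY2.sub (lc2 θ bstar)
  have orth_gAt : ∀ t, ∫ ω, g ω * At t ω ∂μ = 0 := by
    intro t
    have e : ∀ ω, g ω * At t ω = Y ω * At t ω - At t ω * lc θ bstar ω := by
      intro ω; simp only [hgdef]; ring
    simp_rw [e]
    rw [integral_sub (mulL2' hY2 (hAt2 t)) (mulL2' (hAt2 t) (lc2 θ bstar)),
      exp_right (At t) (hAt2 t) θ bstar, M4 t]
    simp only [M1, M2, mul_ite, mul_zero, Finset.sum_ite_eq, Finset.mem_univ, if_pos,
      Finset.sum_const_zero, add_zero]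
    ring
  have orth_gXc : ∀ i, ∫ ω, g ω * Xc i ω ∂μ = 0 := by
    intro i
    have e : ∀ ω, g ω * Xc i ω = Y ω * Xc i ω - Xc i ω * lc θ bstar ω := by
      intro ω; simp only [hgdef]; ring
    simp_rw [e]
    rw [integral_sub (mulL2' hY2 (hXc2 i)) (mulL2' (hXc2 i) (lc2 θ bstar)),
      exp_right (Xc i) (hXc2 i) θ bstar, M5 i]
    simp only [M2', M3, mul_zero, Finset.sum_const_zero, zero_add]
    rw [sumS bstar i, hSb i, sub_self]
  have orth_glc : ∀ δ c, ∫ ω, g ω * lc δ c ω ∂μ = 0 := by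
    intro δ c
    rw [exp_right g hg2 δ c]
    simp [orth_gAt, orth_gXc]
  have quadAt : ∀ δ c t, ∫ ω, lc δ c ω * At t ω ∂μ = π t * δ t := by
    intro δ c t
    rw [show ∫ ω, lc δ c ω * At t ω ∂μ = ∫ ω, At t ω * lc δ c ω ∂μ from
      integral_congr_ae (.of_forall fun ω => mul_comm _ _), exp_right (At t) (hAt2 t) δ c]
    simp only [M1, M2, mul_ite, mul_zero, Finset.sum_ite_eq, Finset.mem_univ, if_pos,
      Finset.sum_const_zero, add_zero]
    ring
  have quadXc : ∀ δ c i, ∫ ω, lc δ c ω * Xc i ω ∂μ = S.mulVec c i := by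
    intro δ c i
    rw [show ∫ ω, lc δ c ω * Xc i ω ∂μ = ∫ ω, Xc i ω * lc δ c ω ∂μ from
      integral_congr_ae (.of_forall fun ω => mul_comm _ _), exp_right (Xc i) (hXc2 i) δ c]
    simp only [M2', M3, mul_zero, Finset.sum_const_zero, zero_add]
    exact sumS c i
  have quad : ∀ δ c, ∫ ω, lc δ c ω * lc δ c ω ∂μ = (∑ t, π t * δ t ^ 2) + c ⬝ᵥ S.mulVec c := by
    intro δ c
    rw [exp_right (lc δ c) (lc2 δ c) δ c]
    simp only [quadAt, quadXc]
    have e2 : ∑ t, δ t * (π t * δ t) = ∑ t, π t * δ t ^ 2 :=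
      Finset.sum_congr rfl (fun t _ => by ring)
    rw [e2]
    rfl
  have Lexp : ∀ ϑ b, L ϑ b = L θ bstar +
      ((∑ t, π t * (ϑ t - θ t) ^ 2) +
        (fun i => b i - bstar i) ⬝ᵥ S.mulVec (fun i => b i - bstar i)) := by
    intro ϑ b
    have hLg : L θ bstar = ∫ ω, g ω ^ 2 ∂μ := by
      rw [hL]
      refine integral_congr_ae (.of_forall fun ω => ?_)
      congr 1
      simp only [hgdef, hlcdef, hAtdef, hXcdef, dotProduct, hA ω, Pi.sub_apply]
      ring
    have hLϑ : L ϑ b = ∫ ω, (g ω - lc (fun t => ϑ t - θ t) (fun i => b i - bstar i) ω) ^ 2 ∂μ := by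
      rw [hL]
      refine integral_congr_ae (.of_forall fun ω => ?_)
      congr 1
      simp only [hgdef, hlcdef, hAtdef, hXcdef, dotProduct, hA ω, Pi.sub_apply, sub_mul,
        Finset.sum_sub_distrib]
      ring
    set δ := fun t => ϑ t - θ t with hδ
    set c := fun i => b i - bstar i with hc
    have e : ∀ ω, (g ω - lc δ c ω) ^ 2
        = g ω ^ 2 + (-2) * (g ω * lc δ c ω) + lc δ c ω * lc δ c ω := by intro ω; ring
    have i1 : Integrable (fun a => (-2 : ℝ) * (g a * lc δ c a)) μ :=
      (mulL2' hg2 (lc2 δ c)).const_mul (-2)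
    have i2 : Integrable (fun a => lc δ c a * lc δ c a) μ := mulL2' (lc2 δ c) (lc2 δ c)
    have i12 : Integrable (fun a => g a ^ 2 + (-2) * (g a * lc δ c a)) μ := by
      exact hg2.integrable_sq.add i1
    rw [hLϑ]
    simp_rw [e]
    rw [integral_add i12 i2, integral_add hg2.integrable_sq i1,
      integral_const_mul, orth_glc δ c, quad δ c, hLg]
    ring
  have qnn : ∀ c : Fin p → ℝ, 0 ≤ c ⬝ᵥ S.mulVec c := by
    intro c
    rcases eq_or_ne c 0 with rfl | hcne
    · simp
    · have h := hSpd.dotProduct_mulVec_pos hcne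
      simpa using h.le
  constructor
  · intro ϑ b
    rw [Lexp ϑ b]
    have h1 : 0 ≤ ∑ t, π t * (ϑ t - θ t) ^ 2 :=
      Finset.sum_nonneg fun t _ => mul_nonneg (hπ t).le (sq_nonneg _)
    linarith [qnn (fun i => b i - bstar i)]
  · intro ϑ b hEq
    rw [Lexp ϑ b] at hEq
    have h1 : 0 ≤ ∑ t, π t * (ϑ t - θ t) ^ 2 :=
      Finset.sum_nonneg fun t _ => mul_nonneg (hπ t).le (sq_nonneg _)
    have h2 := qnn (fun i => b i - bstar i)
    have h3 : ∑ t, π t * (ϑ t - θ t) ^ 2 = 0 := by linarith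
    have h4 : (fun i => b i - bstar i) ⬝ᵥ S.mulVec (fun i => b i - bstar i) = 0 := by linarith
    constructor
    · have h5 := (Finset.sum_eq_zero_iff_of_nonneg
        (fun t _ => mul_nonneg (hπ t).le (sq_nonneg (ϑ t - θ t)))).1 h3
      funext t
      have h6 := h5 t (Finset.mem_univ t)
      rcases mul_eq_zero.1 h6 with h | h
      · exact absurd h (hπ t).ne'
      · have := sq_eq_zero_iff.mp h
        linarith
    · by_contra hb
      have hcne : (fun i => b i - bstar i) ≠ 0 := by
        intro h0
        apply hb
        funext i
        have := congrFun h0 i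
        simpa [sub_eq_zero] using this
      have hpos := hSpd.dotProduct_mulVec_pos hcne
      simp only [star_trivial] at hpos
      linarith
end

section
/- Let Σ be symmetric positive semidefinite, β_t, β_s, β ∈ ℝ^p, π_t, π_s > 0 with π_t + π_s ≤ 1. Suppose the quantity π_t^{-1}(β_t − β)^T Σ (β_t − β) + π_s^{-1}(β_s − β)^T Σ (β_s − β) − (β_t − β_s)^T Σ (β_t − β_s) = 0 and Σ is positive definite. Then β = (π_s β_t + π_t β_s)/(π_t + π_s) and (1 − π_t − π_s)(β_t − β_s) = 0. -/
open Matrix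

/-- Equality characterization (Corollary 1(ii)): zero efficiency gap forces
β = (πₛβₜ + πₜβₛ)/(πₜ+πₛ) and (1−πₜ−πₛ)(βₜ−βₛ) = 0. -/
theorem stmt13 (p : ℕ) (S : Matrix (Fin p) (Fin p) ℝ) (hS : S.PosSemidef)
    (βt βs β : Fin p → ℝ) (πt πs : ℝ) (hπt : 0 < πt) (hπs : 0 < πs) (hsum : πt + πs ≤ 1)
    (hzero : πt⁻¹ * ((βt - β) ⬝ᵥ S.mulVec (βt - β))
        + πs⁻¹ * ((βs - β) ⬝ᵥ S.mulVec (βs - β))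
        - (βt - βs) ⬝ᵥ S.mulVec (βt - βs) = 0)
    (hSpd : S.PosDef) :
    β = (πt + πs)⁻¹ • (πs • βt + πt • βs) ∧ (1 - πt - πs) • (βt - βs) = 0 := by
  set u : Fin p → ℝ := βt - β with hu
  set v : Fin p → ℝ := βs - β with hv
  have hPsd : ∀ x : Fin p → ℝ, 0 ≤ x ⬝ᵥ S.mulVec x := by
    intro x
    have := hS.dotProduct_mulVec_nonneg x
    simpa using this
  have hPd : ∀ x : Fin p → ℝ, x ⬝ᵥ S.mulVec x = 0 → x = 0 := by
    intro x hx
    by_contra h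
    have := hSpd.dotProduct_mulVec_pos h
    simp only [star_trivial] at this
    exact absurd hx (ne_of_gt this)
  have hsym : ∀ x y : Fin p → ℝ, x ⬝ᵥ S.mulVec y = y ⬝ᵥ S.mulVec x := by
    intro x y
    rw [dotProduct_mulVec, ← mulVec_transpose]
    have : Sᵀ = S := by
      have := hS.1
      simpa [Matrix.IsHermitian, conjTranspose_eq_transpose_of_trivial] using this
    rw [this, dotProduct_comm]
  set A : ℝ := u ⬝ᵥ S.mulVec u with hA
  set C : ℝ := v ⬝ᵥ S.mulVec v with hC
  set D : ℝ := u ⬝ᵥ S.mulVec v with hD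
  have hDvu : v ⬝ᵥ S.mulVec u = D := hsym v u
  -- expand Q(u-v)
  have hd : βt - βs = u - v := by
    funext i; simp only [hu, hv, Pi.sub_apply]; ring
  have hQd : (βt - βs) ⬝ᵥ S.mulVec (βt - βs) = A - 2*D + C := by
    rw [hd]
    simp [mulVec_sub, dotProduct_sub, sub_dotProduct, hDvu, hA, hC, hD]
    ring
  set w : Fin p → ℝ := πs • u + πt • v with hw
  have hQw : w ⬝ᵥ S.mulVec w = πs^2*A + 2*πt*πs*D + πt^2*C := by
    simp [hw, mulVec_add, dotProduct_add, add_dotProduct, mulVec_smul,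
      dotProduct_smul, smul_dotProduct, hDvu, hA, hC, hD, smul_eq_mul]
    ring
  have hz : πt⁻¹ * A + πs⁻¹ * C - (A - 2*D + C) = 0 := by
    rw [← hQd]; exact hzero
  have hπt' : πt ≠ 0 := ne_of_gt hπt
  have hπs' : πs ≠ 0 := ne_of_gt hπs
  -- key identity: πt*πs*(πt+πs)*expr = Q(w) + πt*πs*(1-πt-πs)*Q(u-v)
  have hkey : πs^2*A + 2*πt*πs*D + πt^2*C + πt*πs*(1-πt-πs)*(A - 2*D + C) = 0 := by
    have := hz
    field_simp at this
    nlinarith [this]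
  have hQwpos : 0 ≤ πs^2*A + 2*πt*πs*D + πt^2*C := hQw ▸ hPsd w
  have hQdpos : 0 ≤ A - 2*D + C := hQd ▸ hPsd (βt - βs)
  have hco : 0 ≤ πt*πs*(1-πt-πs) := by
    have : 0 ≤ 1 - πt - πs := by linarith
    positivity
  have hQw0 : w ⬝ᵥ S.mulVec w = 0 := by
    rw [hQw]
    nlinarith [mul_nonneg hco hQdpos]
  have hw0 : w = 0 := hPd w hQw0
  have h2 : πt*πs*(1-πt-πs)*(A - 2*D + C) = 0 := by
    have h0 : πs^2*A + 2*πt*πs*D + πt^2*C = 0 := by rw [← hQw, hQw0]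
    linarith [hkey]
  constructor
  · have hsum' : πt + πs ≠ 0 := by positivity
    funext i
    have hwi : πs * (βt i - β i) + πt * (βs i - β i) = 0 := by
      have := congrFun hw0 i
      simpa [hw, hu, hv, smul_eq_mul] using this
    simp [smul_eq_mul]
    field_simp
    linarith
  · by_cases hc : 1 - πt - πs = 0
    · rw [hc, zero_smul]
    · have hQd0 : A - 2*D + C = 0 := by
        have : πt*πs*(1-πt-πs) ≠ 0 := by
          apply mul_ne_zero (mul_ne_zero hπt' hπs') hc
        exact (mul_eq_zero.mp h2).resolve_left this
      have : (βt - βs) ⬝ᵥ S.mulVec (βt - βs) = 0 := by rw [hQd, hQd0]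
      rw [hPd _ this, smul_zero]
end

section
/- Let Σ₁ = E[var(X | Z)] be the expected conditional covariance (positive semidefinite p×p), β_1,...,β_k, b_1,...,b_k ∈ ℝ^p, π_t > 0 with ∑π_t = 1, and 𝔅, B the matrices with these columns. Then diag(π_t^{-1}(β_t − b_t)^T Σ₁ (β_t − b_t)) − (𝔅 − B)^T Σ₁ (𝔅 − B) is positive semidefinite. -/
open Matrix BigOperators

/-- Theorem 3(ii) final step: the key matrix inequality with Σ₁ = E[var(X|Z)]
(any positive semidefinite matrix). -/
theorem stmt16 (p k : ℕ) (S1 : Matrix (Fin p) (Fin p) ℝ) (hS1 : S1.PosSemidef)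
    (β b : Fin k → Fin p → ℝ) (π : Fin k → ℝ) (hπ : ∀ t, 0 < π t) (hsum : ∑ t, π t = 1)
    (Bβ Bb : Matrix (Fin p) (Fin k) ℝ)
    (hBβ : ∀ i t, Bβ i t = β t i) (hBb : ∀ i t, Bb i t = b t i) :
    (Matrix.diagonal (fun t => (π t)⁻¹ * ((β t - b t) ⬝ᵥ S1.mulVec (β t - b t))) -
      (Bβ - Bb)ᵀ * S1 * (Bβ - Bb)).PosSemidef := by
  set R := (open MatrixOrder in CFC.sqrt S1) with hRdef
  have hRR : R * R = S1 := by
    open MatrixOrder in exact CFC.sqrt_mul_sqrt_self S1 hS1.nonneg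
  have hRsym : Rᵀ = R := by
    have : R.IsHermitian := by
      open MatrixOrder in exact (CFC.sqrt_nonneg S1).posSemidef.1
    rw [← Matrix.conjTranspose_eq_transpose_of_trivial]; exact this
  -- key: quadratic form via square root
  have hquad : ∀ u : Fin p → ℝ, u ⬝ᵥ S1 *ᵥ u = ∑ i, ((R *ᵥ u) i) ^ 2 := by
    intro u
    rw [← hRR, ← Matrix.mulVec_mulVec, dotProduct_mulVec]
    have : u ᵥ* R = R *ᵥ u := by rw [← hRsym, Matrix.vecMul_transpose, hRsym]
    rw [this]
    simp [dotProduct, sq]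
  set w : Fin k → Fin p → ℝ := fun t => R *ᵥ (β t - b t) with hw
  have hS1sym : S1ᵀ = S1 := by
    have := hS1.1
    rw [← Matrix.conjTranspose_eq_transpose_of_trivial]; exact this
  rw [Matrix.posSemidef_iff_dotProduct_mulVec]
  constructor
  · show _ = _
    rw [Matrix.conjTranspose_eq_transpose_of_trivial]
    rw [Matrix.transpose_sub, Matrix.transpose_mul, Matrix.transpose_mul,
      Matrix.transpose_transpose, Matrix.diagonal_transpose, hS1sym, ← Matrix.mul_assoc]
  · intro x
    have hx : star x = x := by simp
    rw [hx]
    have hsub : ((Matrix.diagonal (fun t => (π t)⁻¹ * ((β t - b t) ⬝ᵥ S1.mulVec (β t - b t))) -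
        (Bβ - Bb)ᵀ * S1 * (Bβ - Bb)) *ᵥ x)
        = (Matrix.diagonal (fun t => (π t)⁻¹ * ((β t - b t) ⬝ᵥ S1.mulVec (β t - b t)))) *ᵥ x
          - ((Bβ - Bb)ᵀ * S1 * (Bβ - Bb)) *ᵥ x := Matrix.sub_mulVec _ _ _
    rw [hsub, dotProduct_sub]
    -- second term equals quadratic form of y = (Bβ - Bb) *ᵥ x
    have h2 : x ⬝ᵥ ((Bβ - Bb)ᵀ * S1 * (Bβ - Bb)) *ᵥ x
        = ((Bβ - Bb) *ᵥ x) ⬝ᵥ S1 *ᵥ ((Bβ - Bb) *ᵥ x) := by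
      rw [Matrix.mul_assoc, ← Matrix.mulVec_mulVec, dotProduct_mulVec,
        Matrix.vecMul_transpose, ← Matrix.mulVec_mulVec]
    rw [h2, hquad]
    have hlin : ∀ i, (R *ᵥ ((Bβ - Bb) *ᵥ x)) i = ∑ t, w t i * x t := by
      intro i
      rw [Matrix.mulVec_mulVec]
      simp [Matrix.mulVec, Matrix.mul_apply, dotProduct, hw, hBβ, hBb,
        Matrix.sub_apply, Finset.sum_mul]
    have h1 : x ⬝ᵥ (Matrix.diagonal
        (fun t => (π t)⁻¹ * ((β t - b t) ⬝ᵥ S1.mulVec (β t - b t)))) *ᵥ x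
        = ∑ t, (π t)⁻¹ * (∑ i, (w t i) ^ 2) * x t ^ 2 := by
      simp only [hquad]
      simp only [dotProduct, Matrix.mulVec_diagonal]
      apply Finset.sum_congr rfl
      intro t _
      simp only [hw]
      ring
    rw [h1]
    simp only [hlin]
    rw [sub_nonneg]
    -- Cauchy–Schwarz per coordinate
    have key : ∀ i : Fin p, (∑ t, w t i * x t) ^ 2 ≤ ∑ t, (π t)⁻¹ * (w t i)^2 * x t ^ 2 := by
      intro i
      have hCS := Finset.sum_mul_sq_le_sq_mul_sq Finset.univ
        (fun t => Real.sqrt (π t)) (fun t => w t i * x t / Real.sqrt (π t))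
      have heq : ∀ t : Fin k,
          Real.sqrt (π t) * (w t i * x t / Real.sqrt (π t)) = w t i * x t := by
        intro t
        field_simp [Real.sqrt_ne_zero'.2 (hπ t)]
      have heq2 : ∀ t : Fin k, Real.sqrt (π t) ^ 2 = π t := fun t =>
        Real.sq_sqrt (hπ t).le
      have heq3 : ∀ t : Fin k, (w t i * x t / Real.sqrt (π t)) ^ 2
          = (π t)⁻¹ * (w t i)^2 * x t ^ 2 := by
        intro t
        rw [div_pow, heq2]
        ring
      calc (∑ t, w t i * x t) ^ 2
          = (∑ t, Real.sqrt (π t) * (w t i * x t / Real.sqrt (π t))) ^ 2 := by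
            simp_rw [heq]
        _ ≤ (∑ t, Real.sqrt (π t) ^ 2) * ∑ t, (w t i * x t / Real.sqrt (π t)) ^ 2 := hCS
        _ = ∑ t, (π t)⁻¹ * (w t i)^2 * x t ^ 2 := by
            simp_rw [heq2, heq3, hsum, one_mul]
    calc ∑ i, (∑ t, w t i * x t) ^ 2
        ≤ ∑ i, ∑ t, (π t)⁻¹ * (w t i)^2 * x t ^ 2 :=
          Finset.sum_le_sum fun i _ => key i
      _ = ∑ t, (π t)⁻¹ * (∑ i, (w t i) ^ 2) * x t ^ 2 := by
          rw [Finset.sum_comm]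
          refine Finset.sum_congr rfl fun t _ => ?_
          simp only [Finset.mul_sum, Finset.sum_mul]
end
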